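/- Let σ > 0. If a, b > 0 and c ∈ ℝ satisfy 2(σ+2)·b ≤ a and |c| < a + b, then (a+b+c)^{−σ} + (a+b−c)^{−σ} − 2a^{−σ} ≥ 2σ·a^{−σ−1}·( −b + (σ+1)·c²/(4a) ). -/

import Mathlib

open Real Set

private lemma aux_mono {f g : ℝ → ℝ} {T : ℝ}
    (hd : ∀ s ∈ Set.Icc (0:ℝ) T, HasDerivAt f (g s) s)
    (hg : ∀ s ∈ Set.Icc (0:ℝ) T, 0 ≤ g s) :
    MonotoneOn f (Set.Icc 0 T) := by
  apply monotoneOn_of_deriv_nonneg (convex_Icc 0 T)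
  · exact fun s hs => (hd s hs).continuousAt.continuousWithinAt
  · exact fun s hs =>
      ((hd s (interior_subset hs)).differentiableAt).differentiableWithinAt
  · intro s hs
    rw [(hd s (interior_subset hs)).deriv]
    exact hg s (interior_subset hs)

private lemma mid_ineq {x s q : ℝ} (hs : 0 ≤ s) (hsx : s < x) (hq : q ≤ 0) :
    2 * x ^ q ≤ (x + s) ^ q + (x - s) ^ q := by
  have hx : 0 < x := hs.trans_lt hsx
  have h1 : 0 < x + s := by linarith
  have h2 : 0 < x - s := by linarith
  have huv : (x ^ q) ^ 2 ≤ (x + s) ^ q * (x - s) ^ q := by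
    rw [← Real.mul_rpow h1.le h2.le]
    have e : (x ^ q) ^ 2 = (x ^ (2:ℕ)) ^ q := by
      rw [← Real.rpow_natCast (x ^ q) 2, ← Real.rpow_natCast x 2,
        ← Real.rpow_mul hx.le, ← Real.rpow_mul hx.le]
      ring_nf
    rw [e, ← Real.rpow_natCast x 2]
    apply Real.rpow_le_rpow_of_nonpos (by nlinarith) (by nlinarith [Real.rpow_natCast x 2]) hq
  have hu : 0 < (x + s) ^ q := Real.rpow_pos_of_pos h1 q
  have hv : 0 < (x - s) ^ q := Real.rpow_pos_of_pos h2 q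
  have hxq : 0 < x ^ q := Real.rpow_pos_of_pos hx q
  nlinarith [sq_nonneg (Real.sqrt ((x+s)^q) - Real.sqrt ((x-s)^q)),
    Real.sq_sqrt hu.le, Real.sq_sqrt hv.le,
    Real.sqrt_nonneg ((x+s)^q), Real.sqrt_nonneg ((x-s)^q),
    mul_nonneg (Real.sqrt_nonneg ((x+s)^q)) (Real.sqrt_nonneg ((x-s)^q))]

private lemma second_diff {σ x c : ℝ} (hσ : 0 < σ) (hc : 0 ≤ c) (hcx : c < x) :
    2 * x ^ (-σ) + σ * (σ+1) * c ^ 2 * x ^ (-σ-2) ≤ (x + c) ^ (-σ) + (x - c) ^ (-σ) := by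
  have hx : 0 < x := hc.trans_lt hcx
  set K := σ * (σ+1) * x ^ (-σ-2) with hK
  -- Step A : the function φ is nonnegative on [0,c]
  have hφ : ∀ s ∈ Set.Icc (0:ℝ) c,
      0 ≤ σ * (x - s) ^ (-σ-1) - σ * (x + s) ^ (-σ-1) - 2 * K * s := by
    have hmono : MonotoneOn
        (fun t => σ * (x - t) ^ (-σ-1) - σ * (x + t) ^ (-σ-1) - 2 * K * t)
        (Set.Icc 0 c) := by
      apply aux_mono (g := fun s =>
        σ*(σ+1)*(x - s) ^ (-σ-2) + σ*(σ+1)*(x + s) ^ (-σ-2) - 2*K)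
      · intro s hs
        obtain ⟨hs0, hsc⟩ := hs
        have hxs1 : 0 < x - s := by linarith [hsc.trans_lt hcx]
        have hxs2 : 0 < x + s := by linarith
        have d1 : HasDerivAt (fun t => (x - t) ^ (-σ-1))
            ((0-1) * (-σ-1) * (x - s) ^ (-σ-1-1)) s :=
          ((hasDerivAt_const s x).sub (hasDerivAt_id s)).rpow_const (Or.inl hxs1.ne')
        have d2 : HasDerivAt (fun t => (x + t) ^ (-σ-1))
            ((0+1) * (-σ-1) * (x + s) ^ (-σ-1-1)) s :=
          ((hasDerivAt_const s x).add (hasDerivAt_id s)).rpow_const (Or.inl hxs2.ne')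
        have d3 : HasDerivAt (fun t => 2 * K * t) (2 * K * 1) s :=
          (hasDerivAt_id s).const_mul (2*K)
        have hd := ((d1.const_mul σ).sub (d2.const_mul σ)).sub d3
        have e : σ*(σ+1)*(x - s) ^ (-σ-2) + σ*(σ+1)*(x + s) ^ (-σ-2) - 2*K
            = σ * ((0-1) * (-σ-1) * (x - s) ^ (-σ-1-1))
              - σ * ((0+1) * (-σ-1) * (x + s) ^ (-σ-1-1)) - 2 * K * 1 := by
          rw [show -σ-1-(1:ℝ) = -σ-2 by ring]
          ring
        rw [e]
        exact hd
      · intro s hs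
        obtain ⟨hs0, hsc⟩ := hs
        have hsx : s < x := lt_of_le_of_lt hsc hcx
        have := mid_ineq hs0 hsx (show -σ-2 ≤ 0 by linarith)
        have hσσ : 0 < σ * (σ+1) := by nlinarith
        rw [hK]
        nlinarith [this]
    intro s hs
    have h0 : (0:ℝ) ∈ Set.Icc (0:ℝ) c := ⟨le_refl 0, hc⟩
    have := hmono h0 hs hs.1
    simpa using this
  -- Step B : integrate once more
  have hmono2 : MonotoneOn
      (fun t => (x + t) ^ (-σ) + (x - t) ^ (-σ) - K * t ^ 2)
      (Set.Icc 0 c) := by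
    apply aux_mono (g := fun s =>
      σ * (x - s) ^ (-σ-1) - σ * (x + s) ^ (-σ-1) - 2 * K * s)
    · intro s hs
      obtain ⟨hs0, hsc⟩ := hs
      have hxs1 : 0 < x - s := by linarith [hsc.trans_lt hcx]
      have hxs2 : 0 < x + s := by linarith
      have d1 : HasDerivAt (fun t => (x + t) ^ (-σ))
          ((0+1) * (-σ) * (x + s) ^ (-σ-1)) s :=
        ((hasDerivAt_const s x).add (hasDerivAt_id s)).rpow_const (Or.inl hxs2.ne')
      have d2 : HasDerivAt (fun t => (x - t) ^ (-σ))
          ((0-1) * (-σ) * (x - s) ^ (-σ-1)) s :=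
        ((hasDerivAt_const s x).sub (hasDerivAt_id s)).rpow_const (Or.inl hxs1.ne')
      have d3 : HasDerivAt (fun t : ℝ => K * t ^ 2) (K * ((2:ℕ) * s ^ (2-1))) s :=
        (hasDerivAt_pow 2 s).const_mul K
      have hd := (d1.add d2).sub d3
      have e : σ * (x - s) ^ (-σ-1) - σ * (x + s) ^ (-σ-1) - 2 * K * s
          = (0+1) * (-σ) * (x + s) ^ (-σ-1) + (0-1) * (-σ) * (x - s) ^ (-σ-1)
            - K * ((2:ℕ) * s ^ (2-1)) := by
        push_cast
        ring
      rw [e]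
      exact hd
    · exact hφ
  have h0 : (0:ℝ) ∈ Set.Icc (0:ℝ) c := ⟨le_refl 0, hc⟩
  have hcmem : c ∈ Set.Icc (0:ℝ) c := ⟨hc, le_refl c⟩
  have := hmono2 h0 hcmem hc
  simp only [add_zero, sub_zero] at this
  nlinarith [this]

private lemma tangent_line {σ a b : ℝ} (hσ : 0 < σ) (ha : 0 < a) (hb : 0 ≤ b) :
    a ^ (-σ) - σ * a ^ (-σ-1) * b ≤ (a + b) ^ (-σ) := by
  have hmono : MonotoneOn (fun t => (a + t) ^ (-σ) + σ * a ^ (-σ-1) * t)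
      (Set.Icc 0 b) := by
    apply aux_mono (g := fun s => (0+1) * (-σ) * (a + s) ^ (-σ-1) + σ * a ^ (-σ-1))
    · intro s hs
      have has : 0 < a + s := by linarith [hs.1]
      have d1 : HasDerivAt (fun t => (a + t) ^ (-σ))
          ((0+1) * (-σ) * (a + s) ^ (-σ-1)) s :=
        ((hasDerivAt_const s a).add (hasDerivAt_id s)).rpow_const (Or.inl has.ne')
      have d2 : HasDerivAt (fun t => σ * a ^ (-σ-1) * t) (σ * a ^ (-σ-1) * 1) s :=
        (hasDerivAt_id s).const_mul _
      have hd := d1.add d2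
      rw [mul_one] at hd
      exact hd
    · intro s hs
      have has : 0 < a + s := by linarith [hs.1]
      have : (a + s) ^ (-σ-1) ≤ a ^ (-σ-1) :=
        Real.rpow_le_rpow_of_nonpos ha (by linarith [hs.1]) (by linarith)
      nlinarith [this]
  have h0 : (0:ℝ) ∈ Set.Icc (0:ℝ) b := ⟨le_refl 0, hb⟩
  have hbmem : b ∈ Set.Icc (0:ℝ) b := ⟨hb, le_refl b⟩
  have := hmono h0 hbmem hb
  simp only [add_zero, mul_zero] at this
  linarith [this]

private lemma stepC {σ a b : ℝ} (hσ : 0 < σ) (ha : 0 < a) (hb : 0 < b)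
    (h1 : 2 * (σ + 2) * b ≤ a) :
    a ^ (-σ-2) / 2 ≤ (a + b) ^ (-σ-2) := by
  have hn : (0:ℝ) < σ + 2 := by linarith
  set u := 1 / (2 * (σ + 2)) with hu
  have hu0 : 0 < u := by positivity
  have hab : a + b ≤ a * (1 + u) := by
    have : b ≤ a * u := by
      rw [hu]
      rw [mul_one_div, le_div_iff₀ (by positivity)]
      linarith [h1]
    nlinarith [this]
  have key : (a + b) ^ (σ+2) ≤ 2 * a ^ (σ+2) := by
    have s1 : (a + b) ^ (σ+2) ≤ (a * (1 + u)) ^ (σ+2) :=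
      Real.rpow_le_rpow (by linarith) hab (by linarith)
    have s2 : (a * (1 + u)) ^ (σ+2) = a ^ (σ+2) * (1 + u) ^ (σ+2) :=
      Real.mul_rpow ha.le (by linarith)
    have s3 : (1 + u) ^ (σ+2) ≤ (Real.exp u) ^ (σ+2) :=
      Real.rpow_le_rpow (by linarith) (by linarith [Real.add_one_le_exp u]) (by linarith)
    have s4 : (Real.exp u) ^ (σ+2) = Real.exp (1/2) := by
      rw [← Real.exp_mul, hu]
      congr 1
      field_simp
    have s5 : Real.exp (1/2) ≤ 2 := by
      have he : Real.exp (1/2) * Real.exp (1/2) = Real.exp 1 := by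
        rw [← Real.exp_add]; norm_num
      nlinarith [Real.exp_one_lt_d9, Real.exp_pos (1/2 : ℝ), he]
    have hap : 0 < a ^ (σ+2) := Real.rpow_pos_of_pos ha _
    nlinarith [s1, s3, Real.rpow_pos_of_pos (show (0:ℝ) < 1 + u by linarith) (σ+2)]
  have hXp : 0 < a ^ (σ+2) := Real.rpow_pos_of_pos ha _
  have hYp : 0 < (a + b) ^ (σ+2) := Real.rpow_pos_of_pos (by linarith) _
  have hinv : (2 * a ^ (σ+2))⁻¹ ≤ ((a + b) ^ (σ+2))⁻¹ :=
    inv_anti₀ hYp key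
  rw [show -σ-2 = -(σ+2) by ring, Real.rpow_neg ha.le, Real.rpow_neg (by linarith : (0:ℝ) ≤ a + b)]
  calc (a ^ (σ+2))⁻¹ / 2 = (2 * a ^ (σ+2))⁻¹ := by
        rw [mul_inv]; ring
    _ ≤ ((a + b) ^ (σ+2))⁻¹ := hinv

theorem rpow_second_difference_estimate (σ a b c : ℝ) (hσ : 0 < σ) (ha : 0 < a) (hb : 0 < b)
    (h1 : 2 * (σ + 2) * b ≤ a) (h2 : |c| < a + b) :
    (a + b + c) ^ (-σ) + (a + b - c) ^ (-σ) - 2 * a ^ (-σ) ≥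
      2 * σ * a ^ (-σ - 1) * (-b + (σ + 1) * c ^ 2 / (4 * a)) := by
  have hx : 0 < a + b := by linarith
  have main := second_diff hσ (abs_nonneg c) h2
  have hsum : (a + b + |c|) ^ (-σ) + (a + b - |c|) ^ (-σ)
      = (a + b + c) ^ (-σ) + (a + b - c) ^ (-σ) := by
    rcases abs_cases c with ⟨h, _⟩ | ⟨h, _⟩
    · rw [h]
    · rw [h, show a + b + -c = a + b - c by ring, show a + b - -c = a + b + c by ring,
        add_comm]
  rw [hsum, sq_abs] at main
  have htang := tangent_line hσ ha hb.le
  have hC := stepC hσ ha hb h1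
  have hA : a ^ (-σ-2) = a ^ (-σ-1) / a := by
    rw [show -σ-2 = (-σ-1) + (-1) by ring, Real.rpow_add ha, Real.rpow_neg_one,
      div_eq_mul_inv]
  have hkey : σ*(σ+1)*c^2 * (a ^ (-σ-2) / 2) ≤ σ*(σ+1)*c^2 * (a+b) ^ (-σ-2) :=
    mul_le_mul_of_nonneg_left hC (by positivity)
  have hRHS : 2 * σ * a ^ (-σ - 1) * (-b + (σ + 1) * c ^ 2 / (4 * a))
      = -(2 * σ * a ^ (-σ-1) * b) + σ*(σ+1)*c^2 * (a ^ (-σ-2) / 2) := by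
    rw [hA]
    field_simp
    ring
  rw [ge_iff_le, hRHS]
  have hσ1 : -σ - 1 = -σ-1 := rfl
  linarith [main, htang, hkey]
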